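/- On the set of 1-Lipschitz maps ℝ → X into a metric space X, convergence with respect to the metric d_FS(c,c') = ∫_ℝ d_X(c(t),c'(t)) 2e^{−|t|} dt is equivalent to uniform convergence on compact subsets of ℝ: a sequence cₙ satisfies d_FS(cₙ, c) → 0 if and only if sup_{t ∈ [−R,R]} d_X(cₙ(t), c(t)) → 0 for every R > 0. -/

import Mathlib

/-- The flow space metric on 1-Lipschitz maps `ℝ → X`. -/
noncomputable def dFS {X : Type*} [MetricSpace X] (c c' : ℝ → X) : ℝ :=
  ∫ t : ℝ, dist (c t) (c' t) * (2 * Real.exp (-|t|))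

open MeasureTheory Set Filter Real

/-- An integrability helper: if `fun x => f |x|` is integrable on `(0,∞)` then it is
integrable on `ℝ`. -/
lemma my_integrable_comp_abs {f : ℝ → ℝ} (hf : IntegrableOn (fun x => f |x|) (Ioi 0)) :
    Integrable (fun x => f |x|) := by
  have int_Iic : IntegrableOn (fun x ↦ f |x|) (Iic 0) := by
    rw [← Measure.map_neg_eq_self (volume : Measure ℝ)]
    let m : MeasurableEmbedding fun x : ℝ => -x := (Homeomorph.neg ℝ).measurableEmbedding
    rw [m.integrableOn_map_iff]
    simp_rw [Function.comp_def, abs_neg, neg_preimage, neg_Iic, neg_zero]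
    exact Iff.mpr integrableOn_Ici_iff_integrableOn_Ioi hf
  have := int_Iic.union hf
  rwa [Iic_union_Ioi, integrableOn_univ] at this

lemma my_bound_integrable (B : ℝ) (hB : 0 ≤ B) :
    Integrable (fun t : ℝ => (B + 2 * |t|) * (2 * Real.exp (-|t|))) := by
  apply my_integrable_comp_abs (f := fun x => (B + 2 * x) * (2 * Real.exp (-x)))
  have hexp : IntegrableOn (fun x : ℝ => Real.exp (-(1/2) * x)) (Ioi 0) :=
    exp_neg_integrableOn_Ioi 0 (by norm_num)
  have hmeas : AEStronglyMeasurable (fun x : ℝ => (B + 2 * |x|) * (2 * Real.exp (-|x|)))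
      (volume.restrict (Ioi 0)) := by
    apply Continuous.aestronglyMeasurable
    continuity
  refine Integrable.mono (hexp.const_mul (2 * (B + 4))) hmeas ?_
  filter_upwards [ae_restrict_mem measurableSet_Ioi] with x (hx : 0 < x)
  rw [Real.norm_eq_abs, Real.norm_eq_abs, abs_of_pos hx,
    abs_of_nonneg (by positivity), abs_of_nonneg (by positivity)]
  have h1 : 1 + x / 2 ≤ Real.exp (x / 2) := Real.add_one_le_exp (x/2) |>.trans_eq' (by ring)
  have key : B + 2 * x ≤ (B + 4) * Real.exp (x / 2) := by nlinarith [Real.exp_pos (x/2)]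
  calc (B + 2 * x) * (2 * Real.exp (-x))
      ≤ ((B + 4) * Real.exp (x / 2)) * (2 * Real.exp (-x)) :=
        mul_le_mul_of_nonneg_right key (by positivity)
    _ = 2 * (B + 4) * Real.exp (-(1/2) * x) := by
        rw [show -(1/2:ℝ) * x = x/2 + (-x) by ring, Real.exp_add]; ring

/-- Pointwise bound from Lipschitzness. -/
lemma my_dist_bound {X : Type*} [MetricSpace X] {c₁ c₂ : ℝ → X}
    (h1 : LipschitzWith 1 c₁) (h2 : LipschitzWith 1 c₂) (t : ℝ) :
    dist (c₁ t) (c₂ t) ≤ dist (c₁ 0) (c₂ 0) + 2 * |t| := by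
  have a1 : dist (c₁ t) (c₁ 0) ≤ |t| := by
    have := h1.dist_le_mul t 0
    simpa [Real.dist_eq] using this
  have a2 : dist (c₂ 0) (c₂ t) ≤ |t| := by
    have := h2.dist_le_mul 0 t
    simpa [Real.dist_eq, abs_sub_comm] using this
  calc dist (c₁ t) (c₂ t) ≤ dist (c₁ t) (c₁ 0) + dist (c₁ 0) (c₂ 0) + dist (c₂ 0) (c₂ t) :=
        dist_triangle4 _ _ _ _
    _ ≤ |t| + dist (c₁ 0) (c₂ 0) + |t| := by gcongr
    _ = dist (c₁ 0) (c₂ 0) + 2 * |t| := by ring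

lemma my_integrand_integrable {X : Type*} [MetricSpace X] {c₁ c₂ : ℝ → X}
    (h1 : LipschitzWith 1 c₁) (h2 : LipschitzWith 1 c₂) :
    Integrable (fun t : ℝ => dist (c₁ t) (c₂ t) * (2 * Real.exp (-|t|))) := by
  have hcont : Continuous (fun t : ℝ => dist (c₁ t) (c₂ t) * (2 * Real.exp (-|t|))) := by
    exact ((h1.continuous.dist h2.continuous)).mul (by continuity)
  refine Integrable.mono (my_bound_integrable (dist (c₁ 0) (c₂ 0)) dist_nonneg)
    hcont.aestronglyMeasurable ?_
  filter_upwards with t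
  have e1 : (0:ℝ) ≤ 2 * Real.exp (-|t|) := by positivity
  have e2 : (0:ℝ) ≤ dist (c₁ t) (c₂ t) * (2 * Real.exp (-|t|)) := mul_nonneg dist_nonneg e1
  have e3 : (0:ℝ) ≤ (dist (c₁ 0) (c₂ 0) + 2 * |t|) * (2 * Real.exp (-|t|)) :=
    mul_nonneg (add_nonneg dist_nonneg (by positivity)) e1
  rw [Real.norm_eq_abs, Real.norm_eq_abs, abs_of_nonneg e2, abs_of_nonneg e3]
  exact mul_le_mul_of_nonneg_right (my_dist_bound h1 h2 t) e1

/-- Lower bound for `dFS` when the curves are far apart at one point. -/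
lemma my_dFS_lower {X : Type*} [MetricSpace X] {c₁ c₂ : ℝ → X}
    (h1 : LipschitzWith 1 c₁) (h2 : LipschitzWith 1 c₂)
    {t0 R ε : ℝ} (_hR : 0 < R) (ht0 : t0 ∈ Icc (-R) R) (hε : 0 < ε) (hε1 : ε ≤ 1)
    (hd : ε ≤ dist (c₁ t0) (c₂ t0)) :
    ε / 2 * (2 * Real.exp (-(R + 1))) * (ε / 4) ≤
      ∫ t : ℝ, dist (c₁ t) (c₂ t) * (2 * Real.exp (-|t|)) := by
  set f := fun t : ℝ => dist (c₁ t) (c₂ t) * (2 * Real.exp (-|t|)) with hf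
  have hint := my_integrand_integrable h1 h2
  have hpt : ∀ t ∈ Icc t0 (t0 + ε / 4),
      ε / 2 * (2 * Real.exp (-(R + 1))) ≤ f t := by
    intro t ht
    obtain ⟨ht1, ht2⟩ := ht
    have habs : |t| ≤ R + 1 := by
      rw [abs_le]
      constructor
      · linarith [ht0.1]
      · linarith [ht0.2]
    have hd2 : ε / 2 ≤ dist (c₁ t) (c₂ t) := by
      have a1 : dist (c₁ t0) (c₁ t) ≤ |t - t0| := by
        have := h1.dist_le_mul t0 t
        simpa [Real.dist_eq, abs_sub_comm] using this
      have a2 : dist (c₂ t) (c₂ t0) ≤ |t - t0| := by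
        have := h2.dist_le_mul t t0
        simpa [Real.dist_eq] using this
      have htt : |t - t0| ≤ ε / 4 := by
        rw [abs_le]; constructor <;> linarith
      have := dist_triangle4 (c₁ t0) (c₁ t) (c₂ t) (c₂ t0)
      have h5 : dist (c₁ t0) (c₂ t0) ≤ dist (c₁ t0) (c₁ t) + dist (c₁ t) (c₂ t) +
          dist (c₂ t) (c₂ t0) := this
      linarith
    have hexp : Real.exp (-(R + 1)) ≤ Real.exp (-|t|) :=
      Real.exp_le_exp.mpr (by linarith)
    calc ε / 2 * (2 * Real.exp (-(R + 1))) ≤ ε / 2 * (2 * Real.exp (-|t|)) := by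
          apply mul_le_mul_of_nonneg_left (by linarith) (by positivity)
      _ ≤ dist (c₁ t) (c₂ t) * (2 * Real.exp (-|t|)) :=
          mul_le_mul_of_nonneg_right hd2 (by positivity)
  have hμ : (volume (Icc t0 (t0 + ε / 4))).toReal = ε / 4 := by
    rw [Real.volume_Icc]
    rw [ENNReal.toReal_ofReal (by linarith)]
    ring
  have step1 := setIntegral_ge_of_const_le (μ := volume) measurableSet_Icc
    (by simp [Real.volume_Icc]) hpt hint.integrableOn
  rw [measureReal_def, hμ, smul_eq_mul, mul_comm (ε / 4)] at step1
  refine step1.trans (setIntegral_le_integral hint ?_)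
  filter_upwards with t
  exact mul_nonneg dist_nonneg (by positivity)

/-- For 1-Lipschitz maps `ℝ → X`, convergence in the metric `d_FS` is equivalent to
uniform convergence on compact subsets of `ℝ`. -/
theorem dFS_tendsto_iff_tendstoUniformlyOn {X : Type*} [MetricSpace X]
    (cn : ℕ → ℝ → X) (c : ℝ → X)
    (hcn : ∀ n, LipschitzWith 1 (cn n)) (hc : LipschitzWith 1 c) :
    Filter.Tendsto (fun n => dFS (cn n) c) Filter.atTop (nhds 0) ↔
      ∀ R > (0 : ℝ), TendstoUniformlyOn cn c Filter.atTop (Set.Icc (-R) R) := by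
  constructor
  · intro h R hR
    rw [Metric.tendstoUniformlyOn_iff]
    intro ε hε
    set δ := min (ε / 2) 1 with hδdef
    have hδ : 0 < δ := lt_min (by linarith) one_pos
    have hδ1 : δ ≤ 1 := min_le_right _ _
    have hδε : δ < ε := (min_le_left _ _).trans_lt (by linarith)
    set η := δ / 2 * (2 * Real.exp (-(R + 1))) * (δ / 4) with hηdef
    have hη : 0 < η := by positivity
    filter_upwards [h.eventually (gt_mem_nhds hη)] with n hn
    intro t ht
    by_contra hcon
    push_neg at hcon
    have hd : δ ≤ dist (cn n t) (c t) := by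
      rw [dist_comm]
      exact hδε.le.trans hcon
    have := my_dFS_lower (hcn n) hc hR ht hδ hδ1 hd
    rw [← dFS] at this
    exact absurd hn (not_lt.mpr this)
  · intro h
    have hB : BddAbove (Set.range fun n => dist (cn n 0) (c 0)) := by
      have h0 : Filter.Tendsto (fun n => cn n 0) Filter.atTop (nhds (c 0)) :=
        (h 1 one_pos).tendsto_at (by constructor <;> norm_num)
      exact (tendsto_iff_dist_tendsto_zero.mp h0).bddAbove_range
    obtain ⟨B, hBub⟩ := hB
    have hB0 : 0 ≤ B := dist_nonneg.trans (hBub (Set.mem_range_self 0))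
    have := tendsto_integral_of_dominated_convergence
      (F := fun n t => dist (cn n t) (c t) * (2 * Real.exp (-|t|)))
      (f := fun _ : ℝ => (0:ℝ))
      (fun t : ℝ => (B + 2 * |t|) * (2 * Real.exp (-|t|)))
      (fun n => (my_integrand_integrable (hcn n) hc).aestronglyMeasurable)
      (my_bound_integrable B hB0)
      (fun n => by
        filter_upwards with t
        rw [Real.norm_eq_abs, abs_of_nonneg (mul_nonneg dist_nonneg (by positivity))]
        refine mul_le_mul_of_nonneg_right ?_ (by positivity)
        exact (my_dist_bound (hcn n) hc t).trans
          (by have := hBub (Set.mem_range_self n); simp at this ⊢; linarith))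
      (by
        filter_upwards with t
        have htmem : t ∈ Icc (-(|t| + 1)) (|t| + 1) := by
          constructor
          · linarith [neg_abs_le t]
          · linarith [le_abs_self t]
        have hpt : Filter.Tendsto (fun n => cn n t) Filter.atTop (nhds (c t)) :=
          (h (|t| + 1) (by positivity)).tendsto_at htmem
        have hd0 : Filter.Tendsto (fun n => dist (cn n t) (c t)) Filter.atTop (nhds 0) :=
          tendsto_iff_dist_tendsto_zero.mp hpt
        have := hd0.mul_const (2 * Real.exp (-|t|))
        simpa using this)
    simpa [dFS] using this
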